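/- Let $X = [X_1; X_2]$ be a random vector in $\mathbb{R}^{d_1} \times \mathbb{R}^{d_2}$ with finite second moments such that $\|X - \mathbb{E}X\|_{2,\infty} \le \beta$ almost surely, and fix $k \in \mathbb{N}$ and $\alpha > 0$. Then the function $f_X : (T_\alpha, \|\cdot\|_V) \to \mathbb{R}$ is $8\alpha\beta^2$-Lipschitz; i.e., $|f_X(A) - f_X(B)| \le 8\alpha\beta^2 \|A - B\|_V$ for all $A, B \in T_\alpha$. -/

import Mathlib

open Matrix MeasureTheory
open scoped Matrix.Norms.L2Operator

private lemma euc_norm_eq {n : ℕ} (v : Fin n → ℝ) :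
    ‖(EuclideanSpace.equiv (Fin n) ℝ).symm v‖ = Real.sqrt (∑ i, v i ^ 2) := by
  rw [EuclideanSpace.norm_eq]
  simp [Real.norm_eq_abs, sq_abs]

private lemma euc_sq_eq {n : ℕ} (v : Fin n → ℝ) :
    ∑ i, v i ^ 2 = ‖(EuclideanSpace.equiv (Fin n) ℝ).symm v‖ ^ 2 := by
  rw [euc_norm_eq, Real.sq_sqrt]
  positivity

private lemma mulVec_norm_le {m n : ℕ} (A : Matrix (Fin m) (Fin n) ℝ) (y : Fin n → ℝ) :
    ‖(EuclideanSpace.equiv (Fin m) ℝ).symm (A *ᵥ y)‖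
      ≤ ‖A‖ * ‖(EuclideanSpace.equiv (Fin n) ℝ).symm y‖ :=
  A.l2_opNorm_mulVec ((EuclideanSpace.equiv (Fin n) ℝ).symm y)

private lemma key_pointwise {d₁ d₂ k : ℕ} {α β : ℝ} (hβ : 0 ≤ β) (hα : 0 ≤ α)
    (A B : Matrix (Fin k) (Fin d₁) ℝ × Matrix (Fin k) (Fin d₂) ℝ)
    (hA : ‖A‖ ≤ α) (hB : ‖B‖ ≤ α) (y₁ : Fin d₁ → ℝ) (y₂ : Fin d₂ → ℝ)
    (hy₁ : Real.sqrt (∑ a, y₁ a ^ 2) ≤ β) (hy₂ : Real.sqrt (∑ a, y₂ a ^ 2) ≤ β) :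
    |∑ i, ((A.1 *ᵥ y₁ - A.2 *ᵥ y₂) i) ^ 2 - ∑ i, ((B.1 *ᵥ y₁ - B.2 *ᵥ y₂) i) ^ 2|
      ≤ 8 * α * β ^ 2 * ‖A - B‖ := by
  set E₁ := (EuclideanSpace.equiv (Fin d₁) ℝ).symm
  set E₂ := (EuclideanSpace.equiv (Fin d₂) ℝ).symm
  set E := (EuclideanSpace.equiv (Fin k) ℝ).symm
  have hEy₁ : ‖E₁ y₁‖ ≤ β := by rw [show ‖E₁ y₁‖ = _ from euc_norm_eq y₁]; exact hy₁
  have hEy₂ : ‖E₂ y₂‖ ≤ β := by rw [show ‖E₂ y₂‖ = _ from euc_norm_eq y₂]; exact hy₂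
  set u : EuclideanSpace ℝ (Fin k) := E (A.1 *ᵥ y₁ - A.2 *ᵥ y₂) with hu_def
  set v : EuclideanSpace ℝ (Fin k) := E (B.1 *ᵥ y₁ - B.2 *ᵥ y₂) with hv_def
  have hA1 : ‖A.1‖ ≤ α := le_trans (norm_fst_le A) hA
  have hA2 : ‖A.2‖ ≤ α := le_trans (norm_snd_le A) hA
  have hB1 : ‖B.1‖ ≤ α := le_trans (norm_fst_le B) hB
  have hB2 : ‖B.2‖ ≤ α := le_trans (norm_snd_le B) hB
  have hAB1 : ‖A.1 - B.1‖ ≤ ‖A - B‖ := norm_fst_le (A - B)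
  have hAB2 : ‖A.2 - B.2‖ ≤ ‖A - B‖ := norm_snd_le (A - B)
  have bnd : ∀ (M : Matrix (Fin k) (Fin d₁) ℝ) (N : Matrix (Fin k) (Fin d₂) ℝ)
      (c₁ c₂ : ℝ), ‖M‖ ≤ c₁ → ‖N‖ ≤ c₂ → ‖E (M *ᵥ y₁ - N *ᵥ y₂)‖ ≤ c₁ * β + c₂ * β := by
    intro M N c₁ c₂ hM hN
    have h1 : E (M *ᵥ y₁ - N *ᵥ y₂) = E (M *ᵥ y₁) - E (N *ᵥ y₂) := by
      simp [E, map_sub]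
    rw [h1]
    refine le_trans (norm_sub_le _ _) (add_le_add ?_ ?_)
    · exact le_trans (mulVec_norm_le M y₁)
        (mul_le_mul hM hEy₁ (norm_nonneg _) (le_trans (norm_nonneg _) hM))
    · exact le_trans (mulVec_norm_le N y₂)
        (mul_le_mul hN hEy₂ (norm_nonneg _) (le_trans (norm_nonneg _) hN))
  have hu : ‖u‖ ≤ 2 * (α * β) := by
    have := bnd A.1 A.2 α α hA1 hA2; linarith
  have hv : ‖v‖ ≤ 2 * (α * β) := by
    have := bnd B.1 B.2 α α hB1 hB2; linarith
  have huv : ‖u - v‖ ≤ 2 * (‖A - B‖ * β) := by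
    have heq : u - v = E ((A.1 - B.1) *ᵥ y₁ - (A.2 - B.2) *ᵥ y₂) := by
      simp [hu_def, hv_def, E, map_sub, sub_mulVec]
      abel
    rw [heq]
    have := bnd (A.1 - B.1) (A.2 - B.2) ‖A - B‖ ‖A - B‖ hAB1 hAB2; linarith
  have h1 : ∑ i, ((A.1 *ᵥ y₁ - A.2 *ᵥ y₂) i) ^ 2 = ‖u‖ ^ 2 := euc_sq_eq _
  have h2 : ∑ i, ((B.1 *ᵥ y₁ - B.2 *ᵥ y₂) i) ^ 2 = ‖v‖ ^ 2 := euc_sq_eq _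
  rw [h1, h2]
  have hfac : ‖u‖ ^ 2 - ‖v‖ ^ 2 = (‖u‖ - ‖v‖) * (‖u‖ + ‖v‖) := by ring
  rw [hfac, abs_mul]
  have habs1 : |‖u‖ - ‖v‖| ≤ ‖u - v‖ := abs_norm_sub_norm_le u v
  have habs2 : |‖u‖ + ‖v‖| ≤ 4 * (α * β) := by
    rw [abs_of_nonneg (by positivity)]; linarith
  calc |‖u‖ - ‖v‖| * |‖u‖ + ‖v‖| ≤ (2 * (‖A - B‖ * β)) * (4 * (α * β)) := by
        apply mul_le_mul (le_trans habs1 huv) habs2 (abs_nonneg _)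
        positivity
    _ = 8 * α * β ^ 2 * ‖A - B‖ := by ring

theorem fX_lipschitz_on_Talpha {Ω : Type*} [MeasurableSpace Ω] (P : Measure Ω)
    [IsProbabilityMeasure P] (d₁ d₂ k : ℕ)
    (X : Ω → (Fin d₁ → ℝ) × (Fin d₂ → ℝ)) (hX : Measurable X) (hXint : Integrable X P)
    (β α : ℝ) (hβ : 0 ≤ β) (hα : 0 < α)
    (μ₁ : Fin d₁ → ℝ) (hμ₁ : μ₁ = ∫ ω, (X ω).1 ∂P)
    (μ₂ : Fin d₂ → ℝ) (hμ₂ : μ₂ = ∫ ω, (X ω).2 ∂P)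
    (hbound : ∀ᵐ ω ∂P,
      max (Real.sqrt (∑ a, ((X ω).1 a - μ₁ a) ^ 2))
          (Real.sqrt (∑ a, ((X ω).2 a - μ₂ a) ^ 2)) ≤ β)
    (fX : Matrix (Fin k) (Fin d₁) ℝ × Matrix (Fin k) (Fin d₂) ℝ → ℝ)
    (hfX : ∀ A : Matrix (Fin k) (Fin d₁) ℝ × Matrix (Fin k) (Fin d₂) ℝ,
      fX A = ∫ ω, ∑ i, ((A.1 *ᵥ ((X ω).1 - μ₁) - A.2 *ᵥ ((X ω).2 - μ₂)) i) ^ 2 ∂P)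
    (A B : Matrix (Fin k) (Fin d₁) ℝ × Matrix (Fin k) (Fin d₂) ℝ)
    (hA : ‖A‖ ≤ α) (hB : ‖B‖ ≤ α) :
    |fX A - fX B| ≤ 8 * α * β ^ 2 * ‖A - B‖ := by
  set g : (Matrix (Fin k) (Fin d₁) ℝ × Matrix (Fin k) (Fin d₂) ℝ) → Ω → ℝ :=
    fun C ω => ∑ i, ((C.1 *ᵥ ((X ω).1 - μ₁) - C.2 *ᵥ ((X ω).2 - μ₂)) i) ^ 2 with hg
  have hmeas : ∀ C, Measurable (g C) := by
    intro C
    apply Finset.measurable_sum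
    intro i _
    apply Measurable.pow_const
    apply Measurable.sub
    · simp only [Matrix.mulVec, dotProduct, Pi.sub_apply]
      apply Finset.measurable_sum
      intro j _
      exact measurable_const.mul (((measurable_pi_apply j).comp (hX.fst)).sub measurable_const)
    · simp only [Matrix.mulVec, dotProduct, Pi.sub_apply]
      apply Finset.measurable_sum
      intro j _
      exact measurable_const.mul (((measurable_pi_apply j).comp (hX.snd)).sub measurable_const)
  have hgnn : ∀ C ω, 0 ≤ g C ω := by
    intro C ω; apply Finset.sum_nonneg; intro i _; positivity
  have hy₁ : ∀ᵐ ω ∂P, Real.sqrt (∑ a, ((X ω).1 a - μ₁ a) ^ 2) ≤ β :=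
    hbound.mono fun ω h => le_trans (le_max_left _ _) h
  have hy₂ : ∀ᵐ ω ∂P, Real.sqrt (∑ a, ((X ω).2 a - μ₂ a) ^ 2) ≤ β :=
    hbound.mono fun ω h => le_trans (le_max_right _ _) h
  have hbd : ∀ C : Matrix (Fin k) (Fin d₁) ℝ × Matrix (Fin k) (Fin d₂) ℝ, ‖C‖ ≤ α →
      ∀ᵐ ω ∂P, ‖g C ω‖ ≤ 8 * α * β ^ 2 * α := by
    intro C hC
    filter_upwards [hy₁, hy₂] with ω h1 h2
    rw [Real.norm_eq_abs, abs_of_nonneg (hgnn C ω)]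
    have h := key_pointwise hβ hα.le C 0 hC (by simp [hα.le]) _ _ h1 h2
    have h0 : (∑ i, (((0 : Matrix (Fin k) (Fin d₁) ℝ × Matrix (Fin k) (Fin d₂) ℝ).1 *ᵥ
        (fun a => (X ω).1 a - μ₁ a) - (0 : Matrix (Fin k) (Fin d₁) ℝ ×
        Matrix (Fin k) (Fin d₂) ℝ).2 *ᵥ fun a => (X ω).2 a - μ₂ a) i) ^ 2) = 0 := by
      simp
    rw [h0, sub_zero] at h
    have hCB : ‖C - 0‖ ≤ α := by simpa using hC
    calc g C ω ≤ 8 * α * β ^ 2 * ‖C - 0‖ := le_trans (le_abs_self _) h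
      _ ≤ 8 * α * β ^ 2 * α := by
          apply mul_le_mul_of_nonneg_left hCB; positivity
  have hint : ∀ C : Matrix (Fin k) (Fin d₁) ℝ × Matrix (Fin k) (Fin d₂) ℝ, ‖C‖ ≤ α →
      Integrable (g C) P := by
    intro C hC
    exact ⟨(hmeas C).aestronglyMeasurable, HasFiniteIntegral.of_bounded (hbd C hC)⟩
  rw [hfX A, hfX B, ← integral_sub (hint A hA) (hint B hB)]
  have hptwise : ∀ᵐ ω ∂P, ‖g A ω - g B ω‖ ≤ 8 * α * β ^ 2 * ‖A - B‖ := by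
    filter_upwards [hy₁, hy₂] with ω h1 h2
    rw [Real.norm_eq_abs]
    exact key_pointwise hβ hα.le A B hA hB _ _ h1 h2
  calc |∫ ω, (g A ω - g B ω) ∂P| = ‖∫ ω, (g A ω - g B ω) ∂P‖ := (Real.norm_eq_abs _).symm
    _ ≤ 8 * α * β ^ 2 * ‖A - B‖ * (P Set.univ).toReal :=
        norm_integral_le_of_norm_le_const hptwise
    _ = 8 * α * β ^ 2 * ‖A - B‖ := by simp
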